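/- arXiv:1007.3478 — 3 statements merged into one kernel-verified Lean document; each statement's English description precedes it below -/
import Mathlib

section
/- Let A = sI − B where B is an m×m matrix with nonnegative entries and s > ρ(B). Then the function I ↦ tr(A[I] log A[I]) on subsets of {1,...,m} is supermodular: tr(A[I] log A[I]) + tr(A[J] log A[J]) ≤ tr(A[I∪J] log A[I∪J]) + tr(A[I∩J] log A[I∩J]). -/
open Matrix

/-- The principal submatrix of `B` with rows and columns in `I`. -/
def rsub {m : ℕ} (B : Matrix (Fin m) (Fin m) ℝ) (I : Finset (Fin m)) :
    Matrix I I ℝ :=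
  B.submatrix (fun i : I => (i : Fin m)) (fun i : I => (i : Fin m))

/-- `log (s·Id − B)`, defined by the series
`(log s)·Id − Σ_{i≥1} Bⁱ/(i sⁱ)`, absolutely convergent when `s > ρ(B)`. -/
noncomputable def mLog {n : Type*} [Fintype n] [DecidableEq n]
    (s : ℝ) (B : Matrix n n ℝ) : Matrix n n ℝ :=
  (Real.log s) • (1 : Matrix n n ℝ) -
    ∑' i : ℕ, ((1 : ℝ) / ((i + 1) * s ^ (i + 1))) • B ^ (i + 1)

/-- `A log A` for the M-matrix `A = s·Id − B`, defined via power series in `B`. -/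
noncomputable def mXLogX {n : Type*} [Fintype n] [DecidableEq n]
    (s : ℝ) (B : Matrix n n ℝ) : Matrix n n ℝ :=
  (s • (1 : Matrix n n ℝ) - B) * mLog s B

/-- product along a path `a, f 0, ..., f (k-1), b` -/
def pProd {n : Type*} (N : Matrix n n ℝ) : (k : ℕ) → n → (Fin k → n) → n → ℝ
  | 0, a, _, b => N a b
  | (k+1), a, f, b => N a (f 0) * pProd N k (f 0) (Fin.tail f) b

lemma pProd_nonneg {n : Type*} {N : Matrix n n ℝ} (hN : ∀ i j, 0 ≤ N i j) :
    ∀ (k : ℕ) (a : n) (f : Fin k → n) (b : n), 0 ≤ pProd N k a f b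
  | 0, a, f, b => hN a b
  | (k+1), a, f, b => mul_nonneg (hN _ _) (pProd_nonneg hN k _ _ _)

lemma pProd_le {n : Type*} {N N' : Matrix n n ℝ} (hN : ∀ i j, 0 ≤ N i j)
    (h : ∀ i j, N i j ≤ N' i j) :
    ∀ (k : ℕ) (a : n) (f : Fin k → n) (b : n), pProd N k a f b ≤ pProd N' k a f b
  | 0, a, f, b => h a b
  | (k+1), a, f, b =>
      mul_le_mul (h _ _) (pProd_le hN h k _ _ _) (pProd_nonneg hN k _ _ _)
        (le_trans (hN _ _) (h _ _))

lemma pow_succ_apply {n : Type*} [Fintype n] [DecidableEq n] (N : Matrix n n ℝ) :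
    ∀ (k : ℕ) (a b : n), (N ^ (k+1)) a b = ∑ f : Fin k → n, pProd N k a f b := by
  intro k
  induction k with
  | zero =>
    intro a b
    simp [pProd]
  | succ k ih =>
    intro a b
    rw [pow_succ', Matrix.mul_apply]
    simp_rw [ih]
    rw [show (∑ f : Fin (k+1) → n, pProd N (k+1) a f b)
        = ∑ p : n × (Fin k → n), pProd N (k+1) a (Fin.cons p.1 p.2) b from
      (Fintype.sum_equiv (Fin.consEquiv (fun _ => n)) _ _ (fun _ => rfl)).symm]
    rw [Fintype.sum_prod_type]
    refine Finset.sum_congr rfl fun x _ => ?_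
    rw [Finset.mul_sum]
    refine Finset.sum_congr rfl fun f _ => ?_
    simp [pProd]

lemma trace_pow_eq {n : Type*} [Fintype n] [DecidableEq n] (N : Matrix n n ℝ) (k : ℕ) :
    Matrix.trace (N ^ (k+1)) =
      ∑ g : Fin (k+1) → n, pProd N k (g 0) (Fin.tail g) (g 0) := by
  rw [show (∑ g : Fin (k+1) → n, pProd N k (g 0) (Fin.tail g) (g 0))
      = ∑ p : n × (Fin k → n), pProd N k p.1 p.2 p.1 from
    (Fintype.sum_equiv (Fin.consEquiv (fun _ => n)) _ _ (fun p => by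
      simp [Fin.consEquiv])).symm]
  rw [Fintype.sum_prod_type, Matrix.trace]
  refine Finset.sum_congr rfl fun a _ => ?_
  rw [Matrix.diag_apply, pow_succ_apply]

lemma pProd_rsub {m : ℕ} (B : Matrix (Fin m) (Fin m) ℝ) (K : Finset (Fin m)) :
    ∀ (k : ℕ) (a : K) (f : Fin k → K) (b : K),
      pProd (rsub B K) k a f b = pProd B k ↑a (fun i => ↑(f i)) ↑b
  | 0, a, f, b => rfl
  | (k+1), a, f, b => by
    show rsub B K a (f 0) * _ = B ↑a ↑(f 0) * _
    rw [pProd_rsub B K k (f 0) (Fin.tail f) b]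
    rfl

lemma sum_pi_subtype {m k : ℕ} (K : Finset (Fin m)) (G : (Fin k → Fin m) → ℝ) :
    ∑ f : Fin k → K, G (fun i => ↑(f i)) =
      ∑ f : Fin k → Fin m, if ∀ i, f i ∈ K then G f else 0 := by
  classical
  rw [Finset.sum_ite, Finset.sum_const_zero, add_zero]
  refine Finset.sum_bij' (fun f _ => fun i => (↑(f i) : Fin m))
    (fun f hf => fun i => (⟨f i, by
      simp only [Finset.mem_filter] at hf
      exact hf.2 i⟩ : K)) ?_ ?_ ?_ ?_ ?_
  · intro f _
    simp only [Finset.mem_filter, Finset.mem_univ, true_and]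
    exact fun i => (f i).2
  · intro f hf
    exact Finset.mem_univ _
  · intro f _
    rfl
  · intro f _
    rfl
  · intro f _
    rfl

lemma trace_rsub_pow {m : ℕ} (B : Matrix (Fin m) (Fin m) ℝ) (K : Finset (Fin m)) (k : ℕ) :
    Matrix.trace ((rsub B K) ^ (k+1)) =
      ∑ g : Fin (k+1) → Fin m,
        if ∀ i, g i ∈ K then pProd B k (g 0) (Fin.tail g) (g 0) else 0 := by
  rw [trace_pow_eq]
  rw [← sum_pi_subtype K (fun g => pProd B k (g 0) (Fin.tail g) (g 0))]
  refine Finset.sum_congr rfl fun g _ => ?_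
  rw [pProd_rsub]
  rfl

lemma trace_rsub_pow_supermodular {m : ℕ} (B : Matrix (Fin m) (Fin m) ℝ)
    (hB : ∀ i j, 0 ≤ B i j) (k : ℕ) (I J : Finset (Fin m)) :
    Matrix.trace ((rsub B I) ^ (k+1)) + Matrix.trace ((rsub B J) ^ (k+1)) ≤
      Matrix.trace ((rsub B (I ∪ J)) ^ (k+1)) + Matrix.trace ((rsub B (I ∩ J)) ^ (k+1)) := by
  simp only [trace_rsub_pow]
  rw [← Finset.sum_add_distrib, ← Finset.sum_add_distrib]
  refine Finset.sum_le_sum fun g _ => ?_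
  have hc : 0 ≤ pProd B k (g 0) (Fin.tail g) (g 0) := pProd_nonneg hB k _ _ _
  by_cases hI : ∀ i, g i ∈ I <;> by_cases hJ : ∀ i, g i ∈ J
  · have hU : ∀ i, g i ∈ I ∪ J := fun i => Finset.mem_union_left _ (hI i)
    have hInt : ∀ i, g i ∈ I ∩ J := fun i => Finset.mem_inter.mpr ⟨hI i, hJ i⟩
    simp [hI, hJ, hU, hInt]
  · have hU : ∀ i, g i ∈ I ∪ J := fun i => Finset.mem_union_left _ (hI i)
    have hInt : ¬ ∀ i, g i ∈ I ∩ J := by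
      intro h; exact hJ fun i => (Finset.mem_inter.mp (h i)).2
    simp [hI, hJ, hU, hInt]
  · have hU : ∀ i, g i ∈ I ∪ J := fun i => Finset.mem_union_right _ (hJ i)
    have hInt : ¬ ∀ i, g i ∈ I ∩ J := by
      intro h; exact hI fun i => (Finset.mem_inter.mp (h i)).1
    simp [hI, hJ, hU, hInt]
  · have hInt : ¬ ∀ i, g i ∈ I ∩ J := by
      intro h; exact hI fun i => (Finset.mem_inter.mp (h i)).1
    simp only [hI, hJ, hInt, if_false, add_zero, zero_add]
    positivity

lemma rsub_pow_nonneg {m : ℕ} (B : Matrix (Fin m) (Fin m) ℝ)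
    (hB : ∀ i j, 0 ≤ B i j) (K : Finset (Fin m)) (j : ℕ) (a b : K) :
    0 ≤ ((rsub B K) ^ (j+1)) a b := by
  rw [pow_succ_apply]
  refine Finset.sum_nonneg fun f _ => ?_
  rw [pProd_rsub]
  exact pProd_nonneg hB j _ _ _

lemma rsub_pow_le {m : ℕ} (B : Matrix (Fin m) (Fin m) ℝ)
    (hB : ∀ i j, 0 ≤ B i j) (K : Finset (Fin m)) (j : ℕ) (a b : K) :
    ((rsub B K) ^ (j+1)) a b ≤ (B ^ (j+1)) ↑a ↑b := by
  rw [pow_succ_apply, pow_succ_apply]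
  have : ∑ f : Fin j → K, pProd (rsub B K) j a f b
      = ∑ f : Fin j → Fin m, if ∀ i, f i ∈ K then pProd B j ↑a f ↑b else 0 := by
    rw [← sum_pi_subtype K (fun f => pProd B j ↑a f ↑b)]
    exact Finset.sum_congr rfl fun f _ => pProd_rsub B K j a f b
  rw [this]
  refine Finset.sum_le_sum fun f _ => ?_
  split
  · exact le_refl _
  · exact pProd_nonneg hB j _ _ _

attribute [local instance] Matrix.linftyOpNormedRing Matrix.linftyOpNormedAlgebra


lemma entry_le_linfty {k : Type*} [Fintype k] [DecidableEq k] (A : Matrix k k ℂ) (i j : k) :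
    ‖A i j‖ ≤ ‖A‖ := by
  rw [Matrix.linfty_opNorm_def]
  have h1 : ‖A i j‖ ≤ ∑ l, ‖A i l‖ :=
    Finset.single_le_sum (fun _ _ => norm_nonneg _) (Finset.mem_univ j)
  have h2 : (∑ l, ‖A i l‖₊ : NNReal) ≤ Finset.univ.sup fun i' => ∑ l, ‖A i' l‖₊ :=
    Finset.le_sup (f := fun i' => ∑ l, ‖A i' l‖₊) (Finset.mem_univ i)
  have h3 : (∑ l, ‖A i l‖ : ℝ) = ((∑ l, ‖A i l‖₊ : NNReal) : ℝ) := by push_cast; rfl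
  calc ‖A i j‖ ≤ (∑ l, ‖A i l‖ : ℝ) := h1
    _ ≤ _ := by rw [h3]; exact_mod_cast h2

lemma growth_bound {m : ℕ} (B : Matrix (Fin m) (Fin m) ℝ) (s : ℝ)
    (hs : spectralRadius ℂ (B.map Complex.ofReal) < ENNReal.ofReal s) :
    0 < s ∧ ∃ C r : ℝ, 0 ≤ C ∧ 0 < r ∧ r < s ∧ ∀ (n : ℕ) (a b : Fin m), |(B ^ n) a b| ≤ C * r ^ n := by
  have s0 : 0 < s := ENNReal.ofReal_pos.mp (lt_of_le_of_lt zero_le hs)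
  refine ⟨s0, ?_⟩
  set Bc := B.map Complex.ofReal with hBc
  obtain ⟨ρr, h1, h2⟩ := exists_between hs
  have hρtop : ρr ≠ ⊤ := (h2.trans_le le_top).ne
  set r := ρr.toReal with hr
  have hr0 : 0 < r := ENNReal.toReal_pos (lt_of_le_of_lt zero_le h1).ne' hρtop
  have hrs : r < s := (ENNReal.lt_ofReal_iff_toReal_lt hρtop).mp h2
  have hT := spectrum.pow_nnnorm_pow_one_div_tendsto_nhds_spectralRadius Bc
  have hev : ∀ᶠ n : ℕ in Filter.atTop, (‖Bc ^ n‖₊ : ENNReal) ^ (1/(n:ℝ)) < ρr :=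
    hT.eventually_lt_const h1
  obtain ⟨N, hN⟩ := Filter.eventually_atTop.mp hev
  have key : ∀ n : ℕ, N ≤ n → 1 ≤ n → ‖Bc ^ n‖ ≤ r ^ n := by
    intro n hn hn1
    have h := hN n hn
    have hn0 : (n:ℝ) ≠ 0 := Nat.cast_ne_zero.mpr (by omega)
    have h2' : ((‖Bc ^ n‖₊ : ENNReal) ^ (1/(n:ℝ))) ^ (n:ℝ) ≤ ρr ^ (n:ℝ) :=
      ENNReal.rpow_le_rpow h.le (Nat.cast_nonneg n)
    rw [← ENNReal.rpow_mul, one_div, inv_mul_cancel₀ hn0, ENNReal.rpow_one,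
      ENNReal.rpow_natCast] at h2'
    have := ENNReal.toReal_le_toReal (by simp) (by simp [ENNReal.pow_ne_top hρtop]) |>.mpr h2'
    simpa [ENNReal.toReal_pow] using this
  set M := max N 1 with hM
  set C : ℝ := 1 + ∑ n ∈ Finset.range M, ‖Bc ^ n‖ / r ^ n with hC
  have hC1 : 1 ≤ C := by
    have : 0 ≤ ∑ n ∈ Finset.range M, ‖Bc ^ n‖ / r ^ n :=
      Finset.sum_nonneg fun n _ => div_nonneg (norm_nonneg _) (by positivity)
    simp [hC]; linarith
  have hbound : ∀ n : ℕ, ‖Bc ^ n‖ ≤ C * r ^ n := by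
    intro n
    rcases lt_or_ge n M with hnM | hnM
    · have hmem : n ∈ Finset.range M := Finset.mem_range.mpr hnM
      have : ‖Bc ^ n‖ / r ^ n ≤ ∑ k ∈ Finset.range M, ‖Bc ^ k‖ / r ^ k :=
        Finset.single_le_sum (fun k _ => div_nonneg (norm_nonneg _) (by positivity)) hmem
      have h4 : ‖Bc ^ n‖ / r ^ n ≤ C := by simp [hC]; linarith
      calc ‖Bc ^ n‖ = (‖Bc ^ n‖ / r ^ n) * r ^ n := by field_simp
        _ ≤ C * r ^ n := by
            apply mul_le_mul_of_nonneg_right h4 (by positivity)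
    · have := key n (le_trans (le_max_left _ _) hnM) (le_trans (le_max_right _ _) hnM)
      calc ‖Bc ^ n‖ ≤ r ^ n := this
        _ ≤ C * r ^ n := le_mul_of_one_le_left (by positivity) hC1
  refine ⟨C, r, by linarith, hr0, hrs, fun n a b => ?_⟩
  have hmap : Bc ^ n = (B ^ n).map Complex.ofReal := by
    rw [hBc]
    have : (B.map Complex.ofRealHom) ^ n = (B ^ n).map Complex.ofRealHom := by
      simp [← RingHom.mapMatrix_apply, ← map_pow]
    exact_mod_cast this
  have : ‖(Bc ^ n) a b‖ ≤ ‖Bc ^ n‖ := entry_le_linfty _ a b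
  rw [hmap] at this
  simp only [Matrix.map_apply, Complex.norm_real] at this
  calc |(B ^ n) a b| = ‖(B ^ n) a b‖ := (Real.norm_eq_abs _).symm
    _ ≤ ‖Bc ^ n‖ := by rw [hmap]; simpa using this
    _ ≤ C * r ^ n := hbound n

noncomputable def cSeq (s : ℝ) (i : ℕ) : ℝ := (1 : ℝ) / ((i + 1) * s ^ (i + 1))
noncomputable def dSeq (s : ℝ) (i : ℕ) : ℝ := (1 : ℝ) / ((i + 1) * (i + 2) * s ^ (i + 1))

lemma dSeq_nonneg {s : ℝ} (hs : 0 < s) (i : ℕ) : 0 ≤ dSeq s i := by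
  unfold dSeq; positivity

lemma cSeq_abs_le {s : ℝ} (hs : 0 < s) (i : ℕ) : |cSeq s i| ≤ 1 / s ^ (i+1) := by
  unfold cSeq
  rw [abs_of_nonneg (by positivity)]
  exact one_div_le_one_div_of_le (by positivity)
    (le_mul_of_one_le_left (by positivity) (by
      have : (0:ℝ) ≤ (i:ℝ) := Nat.cast_nonneg i
      linarith))

lemma dSeq_abs_le {s : ℝ} (hs : 0 < s) (i : ℕ) : |dSeq s i| ≤ 1 / s ^ (i+1) := by
  unfold dSeq
  rw [abs_of_nonneg (by positivity)]
  refine one_div_le_one_div_of_le (by positivity) ?_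
  have h1 : (1:ℝ) ≤ ((i:ℝ) + 1) * ((i:ℝ) + 2) := by nlinarith [Nat.cast_nonneg (α := ℝ) i]
  nlinarith [pow_pos hs (i+1)]

lemma cSeq_sub {s : ℝ} (hs : 0 < s) (i : ℕ) :
    cSeq s i - s * cSeq s (i+1) = dSeq s i := by
  unfold cSeq dSeq
  have h1 : ((i:ℝ) + 1) ≠ 0 := by positivity
  have h2 : ((i:ℝ) + 2) ≠ 0 := by positivity
  have hp : s ^ (i+1) ≠ 0 := by positivity
  have hp2 : s ^ (i+2) ≠ 0 := by positivity
  push_cast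
  rw [pow_succ s (i+1)]
  field_simp
  ring

-- geometric summability helper
lemma summable_of_geom_bound {r s : ℝ} (hr0 : 0 < r) (hrs : r < s)
    (A : ℝ) (u : ℕ → ℝ) (h : ∀ i, |u i| ≤ A * (r/s) ^ i) : Summable u := by
  have hs : 0 < s := hr0.trans hrs
  have hq0 : (0:ℝ) ≤ r / s := by positivity
  have hq1 : r / s < 1 := (div_lt_one hs).mpr hrs
  exact Summable.of_norm_bounded ((summable_geometric_of_lt_one hq0 hq1).mul_left A)
    (fun i => by rw [Real.norm_eq_abs]; exact h i)

-- power ratio identity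
lemma pow_ratio {r s : ℝ} (hs : s ≠ 0) (i k : ℕ) :
    r ^ (i + k) / s ^ (i + 1) = (r ^ k / s) * (r / s) ^ i := by
  rw [div_pow, pow_add, pow_succ']
  field_simp

lemma trace_mXLogX_expand {m : ℕ} (B : Matrix (Fin m) (Fin m) ℝ)
    (hB : ∀ i j, 0 ≤ B i j) (s C r : ℝ) (hC : 0 ≤ C) (hr0 : 0 < r) (hrs : r < s)
    (hgrow : ∀ (n : ℕ) (a b : Fin m), |(B ^ n) a b| ≤ C * r ^ n)
    (K : Finset (Fin m)) :
    Summable (fun i : ℕ => dSeq s i * Matrix.trace ((rsub B K) ^ (i+2))) ∧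
    Matrix.trace (mXLogX s (rsub B K)) =
      s * Real.log s * K.card - (1 + Real.log s) * Matrix.trace (rsub B K)
        + ∑' i : ℕ, dSeq s i * Matrix.trace ((rsub B K) ^ (i+2)) := by
  have hs0 : 0 < s := hr0.trans hrs
  set M := rsub B K with hMdef
  -- entry bound
  have hent : ∀ (j : ℕ) (a b : K), |(M ^ (j+1)) a b| ≤ C * r ^ (j+1) := by
    intro j a b
    rw [abs_of_nonneg (rsub_pow_nonneg B hB K j a b)]
    exact le_trans (rsub_pow_le B hB K j a b)
      (le_trans (le_abs_self _) (hgrow (j+1) a b))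
  -- trace bound
  have htr : ∀ j : ℕ, |Matrix.trace (M ^ (j+1))| ≤ (m * C) * r ^ (j+1) := by
    intro j
    have hcard : (Fintype.card K : ℝ) ≤ m := by
      rw [Fintype.card_coe]
      exact_mod_cast (Finset.card_le_univ K).trans_eq (by simp)
    calc |Matrix.trace (M ^ (j+1))| ≤ ∑ a : K, |(M ^ (j+1)) a a| := by
          rw [Matrix.trace]
          exact Finset.abs_sum_le_sum_abs _ _
      _ ≤ ∑ _a : K, C * r ^ (j+1) := Finset.sum_le_sum fun a _ => hent j a a
      _ = (Fintype.card K : ℝ) * (C * r ^ (j+1)) := by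
          rw [Finset.sum_const, nsmul_eq_mul, Finset.card_univ]
      _ ≤ (m : ℝ) * (C * r ^ (j+1)) := by
          apply mul_le_mul_of_nonneg_right hcard (by positivity)
      _ = (m * C) * r ^ (j+1) := by ring
  -- summability of entries
  have sEnt : ∀ a b : K, Summable fun i : ℕ => cSeq s i * (M ^ (i+1)) a b := by
    intro a b
    refine summable_of_geom_bound hr0 hrs (C * r / s) _ fun i => ?_
    calc |cSeq s i * (M ^ (i+1)) a b| = |cSeq s i| * |(M ^ (i+1)) a b| := abs_mul _ _
      _ ≤ (1 / s ^ (i+1)) * (C * r ^ (i+1)) :=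
          mul_le_mul (cSeq_abs_le hs0 i) (hent i a b) (abs_nonneg _) (by positivity)
      _ = C * (r ^ (i+1) / s ^ (i+1)) := by ring
      _ = C * ((r ^ 1 / s) * (r/s) ^ i) := by rw [← pow_ratio hs0.ne' i 1]
      _ = (C * r / s) * (r/s) ^ i := by ring
  -- summability of trace sequences
  have sTr1 : Summable fun i : ℕ => cSeq s i * Matrix.trace (M ^ (i+1)) := by
    refine summable_of_geom_bound hr0 hrs (m * C * r / s) _ fun i => ?_
    calc |cSeq s i * Matrix.trace (M ^ (i+1))| = |cSeq s i| * |Matrix.trace (M ^ (i+1))| := abs_mul _ _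
      _ ≤ (1 / s ^ (i+1)) * ((m * C) * r ^ (i+1)) :=
          mul_le_mul (cSeq_abs_le hs0 i) (htr i) (abs_nonneg _) (by positivity)
      _ = (m * C) * (r ^ (i+1) / s ^ (i+1)) := by ring
      _ = (m * C) * ((r ^ 1 / s) * (r/s) ^ i) := by rw [← pow_ratio hs0.ne' i 1]
      _ = (m * C * r / s) * (r/s) ^ i := by ring
  have sTr2 : Summable fun i : ℕ => cSeq s i * Matrix.trace (M ^ (i+2)) := by
    refine summable_of_geom_bound hr0 hrs (m * C * (r^2 / s)) _ fun i => ?_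
    calc |cSeq s i * Matrix.trace (M ^ (i+2))| = |cSeq s i| * |Matrix.trace (M ^ (i+2))| := abs_mul _ _
      _ ≤ (1 / s ^ (i+1)) * ((m * C) * r ^ (i+2)) :=
          mul_le_mul (cSeq_abs_le hs0 i) (htr (i+1)) (abs_nonneg _) (by positivity)
      _ = (m * C) * (r ^ (i+2) / s ^ (i+1)) := by ring
      _ = (m * C) * ((r ^ 2 / s) * (r/s) ^ i) := by rw [← pow_ratio hs0.ne' i 2]
      _ = (m * C * (r^2 / s)) * (r/s) ^ i := by ring
  have sTr3 : Summable fun i : ℕ => cSeq s (i+1) * Matrix.trace (M ^ (i+2)) := by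
    refine summable_of_geom_bound hr0 hrs (m * C * (r/s)^2) _ fun i => ?_
    calc |cSeq s (i+1) * Matrix.trace (M ^ (i+2))|
        = |cSeq s (i+1)| * |Matrix.trace (M ^ (i+2))| := abs_mul _ _
      _ ≤ (1 / s ^ (i+2)) * ((m * C) * r ^ (i+2)) :=
          mul_le_mul (cSeq_abs_le hs0 (i+1)) (htr (i+1)) (abs_nonneg _) (by positivity)
      _ = (m * C) * (r ^ (i+2) / s ^ (i+2)) := by ring
      _ = (m * C) * ((r/s) ^ (i+2)) := by rw [div_pow]
      _ = (m * C) * ((r/s)^2 * (r/s) ^ i) := by ring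
      _ = (m * C * (r/s)^2) * (r/s) ^ i := by ring
  have sTr4 : Summable fun i : ℕ => dSeq s i * Matrix.trace (M ^ (i+2)) := by
    refine summable_of_geom_bound hr0 hrs (m * C * (r^2 / s)) _ fun i => ?_
    calc |dSeq s i * Matrix.trace (M ^ (i+2))| = |dSeq s i| * |Matrix.trace (M ^ (i+2))| := abs_mul _ _
      _ ≤ (1 / s ^ (i+1)) * ((m * C) * r ^ (i+2)) :=
          mul_le_mul (dSeq_abs_le hs0 i) (htr (i+1)) (abs_nonneg _) (by positivity)
      _ = (m * C) * (r ^ (i+2) / s ^ (i+1)) := by ring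
      _ = (m * C) * ((r ^ 2 / s) * (r/s) ^ i) := by rw [← pow_ratio hs0.ne' i 2]
      _ = (m * C * (r^2 / s)) * (r/s) ^ i := by ring
  -- matrix-level summability
  have sX : Summable (fun i : ℕ => cSeq s i • M ^ (i+1)) :=
    Pi.summable.mpr fun a => Pi.summable.mpr fun b => by
      simpa only [Matrix.smul_apply, smul_eq_mul] using sEnt a b
  set T : Matrix K K ℝ := ∑' i : ℕ, cSeq s i • M ^ (i+1) with hTdef
  have hTapp : ∀ a b : K, T a b = ∑' i : ℕ, cSeq s i * (M ^ (i+1)) a b := by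
    intro a b
    rw [hTdef]; erw [tsum_apply sX, tsum_apply (Pi.summable.mp sX a)]
    exact tsum_congr fun i => by simp [Matrix.smul_apply]
  -- trace of T
  have hTrT : Matrix.trace T = ∑' i : ℕ, cSeq s i * Matrix.trace (M ^ (i+1)) := by
    rw [Matrix.trace]
    have h1 : ∀ a : K, Matrix.diag T a = ∑' i : ℕ, cSeq s i * (M ^ (i+1)) a a :=
      fun a => hTapp a a
    rw [Finset.sum_congr rfl fun a _ => h1 a]
    rw [← Summable.tsum_finsetSum fun a _ => sEnt a a]
    exact tsum_congr fun i => by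
      rw [Matrix.trace, Finset.mul_sum]
      exact Finset.sum_congr rfl fun a _ => rfl
  -- trace of M * T
  have hTrMT : Matrix.trace (M * T) = ∑' i : ℕ, cSeq s i * Matrix.trace (M ^ (i+2)) := by
    have h1 : Matrix.trace (M * T) = ∑ a : K, ∑ b : K, M a b * T b a := by
      rw [Matrix.trace]
      exact Finset.sum_congr rfl fun a _ => by rw [Matrix.diag_apply, Matrix.mul_apply]
    rw [h1]
    have h2 : ∀ a b : K, M a b * T b a = ∑' i : ℕ, M a b * (cSeq s i * (M ^ (i+1)) b a) := by
      intro a b; rw [hTapp b a, tsum_mul_left]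
    rw [Finset.sum_congr rfl fun a _ => Finset.sum_congr rfl fun b _ => h2 a b]
    have hin : ∀ a b : K, Summable fun i : ℕ => M a b * (cSeq s i * (M ^ (i+1)) b a) :=
      fun a b => (sEnt b a).mul_left _
    have hout : ∀ a : K, Summable fun i : ℕ => ∑ b : K, M a b * (cSeq s i * (M ^ (i+1)) b a) :=
      fun a => summable_sum fun b _ => hin a b
    rw [Finset.sum_congr rfl fun a _ => (Summable.tsum_finsetSum fun b _ => hin a b).symm]
    rw [← Summable.tsum_finsetSum fun a _ => hout a]
    refine tsum_congr fun i => ?_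
    rw [show M ^ (i+2) = M * M ^ (i+1) from pow_succ' M (i+1)]
    rw [Matrix.trace, Finset.mul_sum]
    refine Finset.sum_congr rfl fun a _ => ?_
    rw [Matrix.diag_apply, Matrix.mul_apply, Finset.mul_sum]
    exact Finset.sum_congr rfl fun b _ => by ring
  -- expand mXLogX
  have hXL : mXLogX s M = (s * Real.log s) • (1 : Matrix K K ℝ)
      - Real.log s • M - s • T + M * T := by
    show (s • (1 : Matrix K K ℝ) - M) * (Real.log s • (1 : Matrix K K ℝ) - T) = _
    simp only [sub_mul, mul_sub, Matrix.smul_mul, Matrix.mul_smul, smul_smul, one_mul, mul_one]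
    rw [mul_comm (Real.log s) s]
    abel
  have hTr : Matrix.trace (mXLogX s M)
      = s * Real.log s * (K.card : ℝ) - Real.log s * Matrix.trace M
        - s * Matrix.trace T + Matrix.trace (M * T) := by
    rw [hXL]
    rw [Matrix.trace_add, Matrix.trace_sub, Matrix.trace_sub, Matrix.trace_smul,
      Matrix.trace_smul, Matrix.trace_smul, Matrix.trace_one]
    simp [Fintype.card_coe, smul_eq_mul]
  rw [hTrT, hTrMT] at hTr
  have hsplit : (∑' i : ℕ, cSeq s i * Matrix.trace (M ^ (i+1)))
      = cSeq s 0 * Matrix.trace (M ^ (0+1)) + ∑' i : ℕ, cSeq s (i+1) * Matrix.trace (M ^ (i+2)) := by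
    rw [Summable.tsum_eq_zero_add sTr1]
  have hc0 : s * (cSeq s 0 * Matrix.trace (M ^ (0+1))) = Matrix.trace M := by
    have : cSeq s 0 = 1 / s := by
      unfold cSeq; norm_num
    rw [this, pow_one]
    field_simp
  have hcomb : (∑' i : ℕ, cSeq s i * Matrix.trace (M ^ (i+2)))
      - s * (∑' i : ℕ, cSeq s (i+1) * Matrix.trace (M ^ (i+2)))
      = ∑' i : ℕ, dSeq s i * Matrix.trace (M ^ (i+2)) := by
    rw [← tsum_mul_left, ← Summable.tsum_sub sTr2 (sTr3.mul_left s)]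
    exact tsum_congr fun i => by rw [← cSeq_sub hs0 i]; ring
  refine ⟨sTr4, ?_⟩
  rw [hTr, hsplit]
  linear_combination (-1 : ℝ) * hc0 + hcomb

/-- For a nonsingular M-matrix `A = s·Id − B` (with `B ≥ 0` entrywise and
`s > ρ(B)`), the set function `I ↦ tr (A[I] log A[I])` is supermodular. -/
theorem trace_mmatrix_xlogx_supermodular {m : ℕ} (B : Matrix (Fin m) (Fin m) ℝ)
    (hB : ∀ i j, 0 ≤ B i j) (s : ℝ)
    (hs : spectralRadius ℂ (B.map (Complex.ofReal)) < ENNReal.ofReal s)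
    (I J : Finset (Fin m)) :
    Matrix.trace (mXLogX s (rsub B I)) + Matrix.trace (mXLogX s (rsub B J)) ≤
      Matrix.trace (mXLogX s (rsub B (I ∪ J))) + Matrix.trace (mXLogX s (rsub B (I ∩ J))) := by
  obtain ⟨hs0, C, r, hC, hr0, hrs, hgrow⟩ := growth_bound B s hs
  obtain ⟨sumI, eqI⟩ := trace_mXLogX_expand B hB s C r hC hr0 hrs hgrow I
  obtain ⟨sumJ, eqJ⟩ := trace_mXLogX_expand B hB s C r hC hr0 hrs hgrow J
  obtain ⟨sumU, eqU⟩ := trace_mXLogX_expand B hB s C r hC hr0 hrs hgrow (I ∪ J)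
  obtain ⟨sumN, eqN⟩ := trace_mXLogX_expand B hB s C r hC hr0 hrs hgrow (I ∩ J)
  rw [eqI, eqJ, eqU, eqN]
  have hcardR : ((I ∪ J).card : ℝ) + ((I ∩ J).card : ℝ) = (I.card : ℝ) + (J.card : ℝ) := by
    exact_mod_cast Finset.card_union_add_card_inter I J
  have htraceK : ∀ K : Finset (Fin m), Matrix.trace (rsub B K) = ∑ x ∈ K, B x x := by
    intro K
    exact Finset.sum_coe_sort K (fun x => B x x)
  have htrace : Matrix.trace (rsub B I) + Matrix.trace (rsub B J)
      = Matrix.trace (rsub B (I ∪ J)) + Matrix.trace (rsub B (I ∩ J)) := by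
    rw [htraceK I, htraceK J, htraceK (I ∪ J), htraceK (I ∩ J)]
    exact (Finset.sum_union_inter).symm
  have htsum : (∑' i : ℕ, dSeq s i * Matrix.trace ((rsub B I) ^ (i+2)))
        + (∑' i : ℕ, dSeq s i * Matrix.trace ((rsub B J) ^ (i+2)))
      ≤ (∑' i : ℕ, dSeq s i * Matrix.trace ((rsub B (I ∪ J)) ^ (i+2)))
        + (∑' i : ℕ, dSeq s i * Matrix.trace ((rsub B (I ∩ J)) ^ (i+2))) := by
    rw [← Summable.tsum_add sumI sumJ, ← Summable.tsum_add sumU sumN]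
    refine Summable.tsum_le_tsum (fun i => ?_) (sumI.add sumJ) (sumU.add sumN)
    have hsm := trace_rsub_pow_supermodular B hB (i+1) I J
    have hd := dSeq_nonneg hs0 i
    have := mul_le_mul_of_nonneg_left hsm hd
    linarith [this]
  have hc1 : s * Real.log s * ((I.card : ℝ) + (J.card : ℝ))
      = s * Real.log s * (((I ∪ J).card : ℝ) + ((I ∩ J).card : ℝ)) := by rw [hcardR]
  have hc2 : (1 + Real.log s) * (Matrix.trace (rsub B I) + Matrix.trace (rsub B J))
      = (1 + Real.log s) * (Matrix.trace (rsub B (I ∪ J)) + Matrix.trace (rsub B (I ∩ J))) := by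
    rw [htrace]
  nlinarith [htsum, hc1, hc2]
end

section
/- For any m×m positive semidefinite Hermitian matrix A and any k ∈ {1,...,m}, the maximum of |det A[I,J]| over all pairs of subsets I, J ⊆ {1,...,m} with |I| = |J| = k is attained with I = J; that is, max_{|I|=|J|=k} |det A[I,J]| = max_{|I|=k} det A[I]. -/
open Matrix
open scoped ComplexOrder
open Finset Equiv Function

noncomputable def subsetPermEquiv (k m : ℕ) :
    {s : Finset (Fin m) // s.card = k} × Equiv.Perm (Fin k) ≃
      {p : Fin k → Fin m // Function.Injective p} where
  toFun x := ⟨(x.1.1.orderEmbOfFin x.1.2) ∘ x.2,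
      ((x.1.1.orderEmbOfFin x.1.2).injective).comp x.2.injective⟩
  invFun p :=
    ⟨⟨Finset.univ.map ⟨p.1, p.2⟩, by simp⟩,
      Equiv.ofBijective
        (fun i => ((Finset.univ.map ⟨p.1, p.2⟩).orderIsoOfFin (by simp)).symm ⟨p.1 i, by simp⟩)
        (Finite.injective_iff_bijective.mp (fun a b hab => p.2 (by
          have := congrArg (fun x => ((((Finset.univ.map ⟨p.1, p.2⟩).orderIsoOfFin (by simp)) x : {x // x ∈ Finset.univ.map ⟨p.1, p.2⟩}) : Fin m)) hab
          simpa using this)))⟩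
  left_inv := by
    rintro ⟨⟨s, hs⟩, σ⟩
    set φ : Fin k → Fin m := (s.orderEmbOfFin hs) ∘ σ with hφdef
    have hφ : Function.Injective φ := ((s.orderEmbOfFin hs).injective).comp σ.injective
    set s' : Finset (Fin m) := Finset.univ.map ⟨φ, hφ⟩ with hs'def
    have hs' : s'.card = k := by simp [hs'def]
    have hset : s' = s := by
      ext x
      simp only [hs'def, Finset.mem_map, Function.Embedding.coeFn_mk]
      constructor
      · rintro ⟨i, -, rfl⟩; exact Finset.orderEmbOfFin_mem s hs (σ i)
      · intro hx
        obtain ⟨j, hj⟩ : ∃ j, s.orderEmbOfFin hs j = x := by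
          have h1 := Finset.range_orderEmbOfFin s hs
          rw [Set.ext_iff] at h1
          exact (h1 x).mpr (by simpa using hx)
        exact ⟨σ.symm j, Finset.mem_univ _, by simp [hφdef, hj]⟩
    have hemb : ∀ i, s'.orderEmbOfFin hs' i = s.orderEmbOfFin hs i := by
      have : ∀ x, s'.orderEmbOfFin hs' x ∈ s := fun x => by
        rw [← hset]; exact Finset.orderEmbOfFin_mem s' hs' x
      rw [Finset.orderEmbOfFin_unique' hs this]
      intro i; rfl
    refine Prod.ext (Subtype.ext hset) (Equiv.ext fun i => ?_)
    refine (s.orderEmbOfFin hs).injective ?_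
    rw [← hemb]
    simp only [Equiv.ofBijective_apply, ← Finset.coe_orderIsoOfFin_apply,
      OrderIso.apply_symm_apply]
    exact (congrArg Subtype.val (OrderIso.apply_symm_apply
      ((Finset.univ.map ⟨φ, hφ⟩).orderIsoOfFin hs') _)).trans
      (Finset.coe_orderIsoOfFin_apply s hs (σ i)).symm
  right_inv := by
    rintro ⟨p, hp⟩
    ext i
    simp only [Function.comp_apply, Equiv.ofBijective_apply, ← Finset.coe_orderIsoOfFin_apply,
      OrderIso.apply_symm_apply]

section
open scoped MatrixOrder

noncomputable def Matrix.PosSemidef.sqrt {n : Type*} [Fintype n] [DecidableEq n]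
    {A : Matrix n n ℂ} (_hA : A.PosSemidef) : Matrix n n ℂ := CFC.sqrt A

lemma Matrix.PosSemidef.posSemidef_sqrt {n : Type*} [Fintype n] [DecidableEq n]
    {A : Matrix n n ℂ} (hA : A.PosSemidef) : hA.sqrt.PosSemidef :=
  (CFC.sqrt_nonneg A).posSemidef

lemma Matrix.PosSemidef.sqrt_mul_self {n : Type*} [Fintype n] [DecidableEq n]
    {A : Matrix n n ℂ} (hA : A.PosSemidef) : hA.sqrt * hA.sqrt = A :=
  CFC.sqrt_mul_sqrt_self A hA.nonneg

end

lemma det_submatrix_eq_sum_perm {m k : ℕ} (X : Matrix (Fin m) (Fin k) ℂ) (p : Fin k → Fin m) :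
    (X.submatrix p id).det = ∑ σ : Equiv.Perm (Fin k),
      ((Equiv.Perm.sign σ : ℤ) : ℂ) * ∏ i, X (p i) (σ i) := by
  rw [← Matrix.det_transpose, Matrix.det_apply']
  rfl

lemma cauchy_binet {m k : ℕ} (X Y : Matrix (Fin m) (Fin k) ℂ) :
    (Matrix.of fun i j => ∑ l, X l i * Y l j).det =
      ∑ s : {s : Finset (Fin m) // s.card = k},
        (X.submatrix (s.1.orderEmbOfFin s.2) id).det *
          (Y.submatrix (s.1.orderEmbOfFin s.2) id).det := by
  have step1 : (Matrix.of fun i j => ∑ l, X l i * Y l j).det =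
      ∑ p : Fin k → Fin m, (∏ i, Y (p i) i) * (X.submatrix p id).det := by
    rw [Matrix.det_apply']
    simp only [Matrix.of_apply, Finset.prod_univ_sum, Finset.mul_sum,
      Fintype.piFinset_univ]
    rw [Finset.sum_comm]
    refine Finset.sum_congr rfl fun p _ => ?_
    rw [det_submatrix_eq_sum_perm, Finset.mul_sum]
    refine Finset.sum_congr rfl fun σ _ => ?_
    rw [Finset.prod_mul_distrib]
    ring
  rw [step1]
  have step2 : ∑ p : Fin k → Fin m, (∏ i, Y (p i) i) * (X.submatrix p id).det =
      ∑ p : {p : Fin k → Fin m // Function.Injective p},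
        (∏ i, Y (p.1 i) i) * (X.submatrix p.1 id).det := by
    rw [← Finset.sum_filter_of_ne (p := fun p : Fin k → Fin m => Function.Injective p)
      (fun p _ hne => by
        by_contra hinj
        apply hne
        obtain ⟨a, b, hab, hne'⟩ : ∃ a b, p a = p b ∧ a ≠ b := by
          simp only [Function.Injective, not_forall] at hinj
          obtain ⟨a, b, h1, h2⟩ := hinj
          exact ⟨a, b, h1, h2⟩
        have : (X.submatrix p id).det = 0 :=
          Matrix.det_zero_of_row_eq hne' (funext fun j => by simp [Matrix.submatrix_apply, hab])
        rw [this, mul_zero])]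
    exact (Finset.sum_subtype _ (fun p => by simp) _)
  rw [step2, ← Equiv.sum_comp (subsetPermEquiv k m)
    (fun p => (∏ i, Y (p.1 i) i) * (X.submatrix p.1 id).det), Fintype.sum_prod_type]
  refine Finset.sum_congr rfl fun s _ => ?_
  have hsub : ∀ σ : Equiv.Perm (Fin k),
      (X.submatrix ((s.1.orderEmbOfFin s.2) ∘ σ) id).det =
        ((Equiv.Perm.sign σ : ℤ) : ℂ) * (X.submatrix (s.1.orderEmbOfFin s.2) id).det := by
    intro σ
    rw [show X.submatrix ((s.1.orderEmbOfFin s.2) ∘ σ) id =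
        (X.submatrix (s.1.orderEmbOfFin s.2) id).submatrix σ id from rfl]
    exact Matrix.det_permute σ _
  calc ∑ σ : Equiv.Perm (Fin k),
        (∏ i, Y (((subsetPermEquiv k m) (s, σ)).1 i) i) *
          (X.submatrix ((subsetPermEquiv k m) (s, σ)).1 id).det
      = ∑ σ : Equiv.Perm (Fin k), ((Equiv.Perm.sign σ : ℤ) : ℂ) *
          (∏ i, Y ((s.1.orderEmbOfFin s.2) (σ i)) i) *
          (X.submatrix (s.1.orderEmbOfFin s.2) id).det := by
        refine Finset.sum_congr rfl fun σ _ => ?_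
        rw [show ((subsetPermEquiv k m) (s, σ)).1 = (s.1.orderEmbOfFin s.2) ∘ σ from rfl, hsub σ]
        simp [Function.comp_apply]
        ring
    _ = (X.submatrix (s.1.orderEmbOfFin s.2) id).det *
          (Y.submatrix (s.1.orderEmbOfFin s.2) id).det := by
        rw [← Finset.sum_mul, mul_comm]
        congr 1
        rw [Matrix.det_apply']
        rfl

lemma key_identity {m k : ℕ} (A : Matrix (Fin m) (Fin m) ℂ) (hA : A.PosSemidef)
    (f g : Fin k → Fin m) :
    (A.submatrix f g).det = ∑ s : {s : Finset (Fin m) // s.card = k},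
      (starRingEnd ℂ) ((hA.sqrt.submatrix (s.1.orderEmbOfFin s.2) f).det) *
        (hA.sqrt.submatrix (s.1.orderEmbOfFin s.2) g).det := by
  have hS : hA.sqrt.IsHermitian := hA.posSemidef_sqrt.1
  have h1 : A.submatrix f g = Matrix.of fun i j =>
      ∑ l, (starRingEnd ℂ) (hA.sqrt l (f i)) * hA.sqrt l (g j) := by
    ext i j
    simp only [Matrix.submatrix_apply, Matrix.of_apply]
    conv_lhs => rw [← hA.sqrt_mul_self, Matrix.mul_apply]
    refine Finset.sum_congr rfl fun l _ => ?_
    congr 1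
    conv_lhs => rw [← hS]
    rw [Matrix.conjTranspose_apply]
    rfl
  rw [h1, cauchy_binet (X := fun l i => (starRingEnd ℂ) (hA.sqrt l (f i)))
    (Y := fun l j => hA.sqrt l (g j))]
  refine Finset.sum_congr rfl fun s _ => ?_
  rw [RingHom.map_det]
  rfl

/-- For a positive semidefinite Hermitian `A`, the maximum of `|det A[I,J]|`
over all pairs of `k`-element index sets `I, J` is attained with `I = J`:
there is a `k`-element index set `Istar` (encoded as an embedding
`Fin k ↪ Fin m`) such that `|det A[I,J]| ≤ |det A[Istar]|` for all `k`-element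
`I, J`, and `det A[Istar]` is a nonnegative real, so that
`max_{|I|=|J|=k} |det A[I,J]| = max_{|I|=k} det A[I]`. -/
theorem max_abs_det_eq_max_principal {m k : ℕ} (hk1 : 1 ≤ k) (hkm : k ≤ m)
    (A : Matrix (Fin m) (Fin m) ℂ) (hA : A.PosSemidef) :
    ∃ Istar : Fin k ↪ Fin m,
      (∀ f g : Fin k ↪ Fin m,
        ‖(A.submatrix f g).det‖ ≤ ‖(A.submatrix Istar Istar).det‖) ∧
      (A.submatrix Istar Istar).det = (‖(A.submatrix Istar Istar).det‖ : ℂ) := by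
  classical
  set a : (Fin k → Fin m) → {s : Finset (Fin m) // s.card = k} → ℂ :=
    fun f s => (hA.sqrt.submatrix (s.1.orderEmbOfFin s.2) f).det with ha
  set r : (Fin k → Fin m) → ℝ := fun f => ∑ s, ‖a f s‖^2 with hrdef
  have hr0 : ∀ f, 0 ≤ r f := fun f => Finset.sum_nonneg fun s _ => sq_nonneg _
  have hdiag : ∀ f : Fin k → Fin m, (A.submatrix f f).det = ((r f : ℝ) : ℂ) := by
    intro f
    rw [key_identity A hA f f]
    have h1 : ∀ s : {s : Finset (Fin m) // s.card = k},
        (starRingEnd ℂ) (a f s) * a f s = ((‖a f s‖^2 : ℝ) : ℂ) := fun s => by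
      rw [mul_comm, Complex.mul_conj, ← Complex.sq_norm]
    rw [Finset.sum_congr rfl (fun s _ => h1 s)]
    rw [hrdef]
    push_cast
    rfl
  have hbound : ∀ f g : Fin k → Fin m,
      ‖(A.submatrix f g).det‖^2 ≤ r f * r g := by
    intro f g
    have h1 : ‖(A.submatrix f g).det‖ ≤
        ∑ s, ‖a f s‖ * ‖a g s‖ := by
      rw [key_identity A hA f g]
      refine le_trans (norm_sum_le _ _) (le_of_eq ?_)
      refine Finset.sum_congr rfl fun s _ => ?_
      rw [norm_mul, Complex.norm_conj]
    calc ‖(A.submatrix f g).det‖^2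
        ≤ (∑ s, ‖a f s‖ * ‖a g s‖)^2 :=
          pow_le_pow_left₀ (norm_nonneg _) h1 2
      _ ≤ (∑ s, ‖a f s‖^2) * (∑ s, ‖a g s‖^2) :=
          Finset.sum_mul_sq_le_sq_mul_sq _ _ _
      _ = r f * r g := rfl
  obtain ⟨Istar, -, hmax⟩ := Finset.exists_max_image (Finset.univ : Finset (Fin k ↪ Fin m))
    (fun f => r ⇑f) ⟨Fin.castLEEmb hkm, Finset.mem_univ _⟩
  have habsI : ‖(A.submatrix Istar Istar).det‖ = r ⇑Istar := by
    rw [hdiag Istar, Complex.norm_real, Real.norm_eq_abs, abs_of_nonneg (hr0 _)]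
  refine ⟨Istar, ?_, ?_⟩
  · intro f g
    rw [habsI]
    have h2 := hbound f g
    have h3 : r ⇑f * r ⇑g ≤ r ⇑Istar * r ⇑Istar :=
      mul_le_mul (hmax f (Finset.mem_univ _)) (hmax g (Finset.mem_univ _)) (hr0 _) (hr0 _)
    have h4 : ‖(A.submatrix f g).det‖^2 ≤ (r ⇑Istar)^2 :=
      h2.trans (by rw [sq]; exact h3)
    have h5 := Real.sqrt_le_sqrt h4
    rwa [Real.sqrt_sq (norm_nonneg _), Real.sqrt_sq (hr0 _)] at h5
  · rw [habsI, hdiag Istar]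
end

section
/- Let f be a real continuous function on an interval E that is the primitive of an operator monotone function on the interior of E. Then for each fixed subset I of {1,...,m}, the map A ↦ tr f(A[I]) is convex on the set of m×m Hermitian matrices whose spectra lie in E. -/
open Matrix
open scoped ComplexOrder

/-- The principal submatrix of `A` with rows and columns in `I`. -/
def psub {m : ℕ} (A : Matrix (Fin m) (Fin m) ℂ) (I : Finset (Fin m)) :
    Matrix I I ℂ :=
  A.submatrix (fun i : I => (i : Fin m)) (fun i : I => (i : Fin m))

/-- `trF f M = tr f(M)` for a Hermitian matrix `M`: the sum of `f` applied to the
eigenvalues of `M` (junk value `0` if `M` is not Hermitian). -/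
noncomputable def trF {n : Type*} [Fintype n] [DecidableEq n]
    (f : ℝ → ℝ) (M : Matrix n n ℂ) : ℝ :=
  if h : M.IsHermitian then ∑ i, f (h.eigenvalues i) else 0

/-- `f(M)` for a Hermitian matrix `M`, defined by the spectral decomposition
(junk value `0` if `M` is not Hermitian). -/
noncomputable def matF {n : Type*} [Fintype n] [DecidableEq n]
    (f : ℝ → ℝ) (M : Matrix n n ℂ) : Matrix n n ℂ :=
  if h : M.IsHermitian then
    (h.eigenvectorUnitary : Matrix n n ℂ) *
      Matrix.diagonal (fun i => (f (h.eigenvalues i) : ℂ)) *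
      (star (h.eigenvectorUnitary : Matrix n n ℂ))
  else 0

section Aux

lemma col_norm {n : Type*} [Fintype n] [DecidableEq n] {U : Matrix n n ℂ}
    (hU : star U * U = 1) (i : n) : ∑ j, Complex.normSq (U j i) = 1 := by
  have h := congrFun (congrFun hU i) i
  simp only [Matrix.mul_apply, Matrix.one_apply_eq, Matrix.star_apply, Pi.star_apply,
    RCLike.star_def] at h
  have : (↑(∑ j, Complex.normSq (U j i)) : ℂ) = 1 := by
    push_cast
    rw [← h]
    congr 1; ext j
    rw [← Complex.normSq_eq_conj_mul_self]
  exact_mod_cast this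

lemma row_norm {n : Type*} [Fintype n] [DecidableEq n] {U : Matrix n n ℂ}
    (hU : U * star U = 1) (j : n) : ∑ i, Complex.normSq (U j i) = 1 := by
  have h := congrFun (congrFun hU j) j
  simp only [Matrix.mul_apply, Matrix.one_apply_eq, Matrix.star_apply, Pi.star_apply,
    RCLike.star_def] at h
  have : (↑(∑ i, Complex.normSq (U j i)) : ℂ) = 1 := by
    push_cast
    rw [← h]
    congr 1; ext i
    rw [mul_comm, ← Complex.normSq_eq_conj_mul_self]
  exact_mod_cast this

lemma diag_conj {n : Type*} [Fintype n] (A U : Matrix n n ℂ) (i : n) :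
    (star U * A * U) i i = star (fun j => U j i) ⬝ᵥ A *ᵥ (fun j => U j i) := by
  simp only [Matrix.mul_apply, dotProduct, Matrix.mulVec, Matrix.star_apply, Pi.star_apply,
    dotProduct, RCLike.star_def, Finset.sum_mul, Finset.mul_sum]
  rw [Finset.sum_comm]
  congr 1; ext j; congr 1; ext k; ring

lemma col_dot {n : Type*} [Fintype n] [DecidableEq n] {U : Matrix n n ℂ}
    (hU : star U * U = 1) (i : n) :
    star (fun j => U j i) ⬝ᵥ (fun j => U j i) = 1 := by
  have h := congrFun (congrFun hU i) i
  simpa [Matrix.mul_apply, dotProduct] using h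

lemma diag_eq_eigenvalue {n : Type*} [Fintype n] [DecidableEq n] {C : Matrix n n ℂ}
    (hC : C.IsHermitian) (i : n) :
    star (fun j => (hC.eigenvectorUnitary : Matrix n n ℂ) j i) ⬝ᵥ
      C *ᵥ (fun j => (hC.eigenvectorUnitary : Matrix n n ℂ) j i) = (hC.eigenvalues i : ℂ) := by
  have h := congrFun (congrFun (show star (hC.eigenvectorUnitary : Matrix n n ℂ) * C * (hC.eigenvectorUnitary : Matrix n n ℂ) = diagonal (RCLike.ofReal ∘ hC.eigenvalues) from by have hd0 := hC.conjStarAlgAut_star_eigenvectorUnitary; rwa [Unitary.conjStarAlgAut_star_apply] at hd0) i) i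
  simp only [Matrix.diagonal_apply_eq, Function.comp_apply] at h
  rw [show ((hC.eigenvalues i : ℂ)) = RCLike.ofReal (hC.eigenvalues i) from rfl, ← h]
  simp only [Matrix.mul_apply, dotProduct, Matrix.mulVec, dotProduct, Matrix.star_apply,
    Pi.star_apply, RCLike.star_def, Finset.sum_mul, Finset.mul_sum]
  rw [Finset.sum_comm]
  congr 1; ext j; congr 1; ext k; ring

lemma rayleigh_mem {n : Type*} [Fintype n] [DecidableEq n] {E : Set ℝ} (hE : Convex ℝ E)
    {A : Matrix n n ℂ} (hA : A.IsHermitian) (hAE : ∀ i, hA.eigenvalues i ∈ E)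
    (w : n → ℂ) (hw : star w ⬝ᵥ w = 1) :
    ∃ r ∈ E, star w ⬝ᵥ A *ᵥ w = (r : ℂ) := by
  set V := (hA.eigenvectorUnitary : Matrix n n ℂ) with hV
  have hV1 : star V * V = 1 := Matrix.mem_unitaryGroup_iff'.mp hA.eigenvectorUnitary.2
  have hV2 : V * star V = 1 := Matrix.mem_unitaryGroup_iff.mp hA.eigenvectorUnitary.2
  set u := star V *ᵥ w with hu
  have hstaru : star u = star w ᵥ* V := by
    rw [hu, Matrix.star_mulVec, Matrix.star_eq_conjTranspose, conjTranspose_conjTranspose]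
  have key : star w ⬝ᵥ A *ᵥ w
      = star u ⬝ᵥ (diagonal (fun j => (hA.eigenvalues j : ℂ))) *ᵥ u := by
    conv_lhs => rw [hA.spectral_theorem, Unitary.conjStarAlgAut_apply]
    rw [← Matrix.mulVec_mulVec, ← Matrix.mulVec_mulVec, Matrix.dotProduct_mulVec (star w),
      ← hstaru, hu]
    rfl
  have husum : star u ⬝ᵥ u = 1 := by
    rw [hstaru, hu, ← Matrix.dotProduct_mulVec, Matrix.mulVec_mulVec, hV2, Matrix.one_mulVec, hw]
  have hq : ∑ j, Complex.normSq (u j) = 1 := by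
    have : (↑(∑ j, Complex.normSq (u j)) : ℂ) = 1 := by
      push_cast
      rw [← husum]
      simp only [dotProduct, Pi.star_apply, RCLike.star_def]
      congr 1; ext j
      rw [← Complex.normSq_eq_conj_mul_self]
    exact_mod_cast this
  refine ⟨∑ j, Complex.normSq (u j) * hA.eigenvalues j, ?_, ?_⟩
  · have := hE.sum_mem (t := Finset.univ) (w := fun j => Complex.normSq (u j))
      (z := fun j => hA.eigenvalues j) (fun j _ => Complex.normSq_nonneg _) hq
      (fun j _ => hAE j)
    simpa [smul_eq_mul] using this
  · rw [key]
    simp only [dotProduct, Matrix.mulVec_diagonal, Pi.star_apply, RCLike.star_def]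
    push_cast
    congr 1; ext j
    rw [show (starRingEnd ℂ) (u j) * ((hA.eigenvalues j : ℂ) * u j)
        = ((starRingEnd ℂ) (u j) * u j) * (hA.eigenvalues j : ℂ) from by ring,
      ← Complex.normSq_eq_conj_mul_self]

lemma peierls {n : Type*} [Fintype n] [DecidableEq n] {E : Set ℝ}
    {f : ℝ → ℝ} (hf : ConvexOn ℝ E f)
    {A : Matrix n n ℂ} (hA : A.IsHermitian) (hAE : ∀ i, hA.eigenvalues i ∈ E)
    {U : Matrix n n ℂ} (hU1 : star U * U = 1) (hU2 : U * star U = 1) :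
    ∑ i, f ((star U * A * U) i i).re ≤ ∑ i, f (hA.eigenvalues i) := by
  set V := (hA.eigenvectorUnitary : Matrix n n ℂ) with hV
  have hV1 : star V * V = 1 := Matrix.mem_unitaryGroup_iff'.mp hA.eigenvectorUnitary.2
  have hV2 : V * star V = 1 := Matrix.mem_unitaryGroup_iff.mp hA.eigenvectorUnitary.2
  set W := star V * U with hW
  have hsW : star W = star U * V := by rw [hW, StarMul.star_mul, star_star]
  have hW1 : star W * W = 1 := by
    rw [hsW, hW, mul_assoc, ← mul_assoc V, hV2, one_mul, hU1]
  have hW2 : W * star W = 1 := by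
    rw [hsW, hW, mul_assoc, ← mul_assoc U, hU2, one_mul, hV1]
  have hconj : star U * A * U = star W * diagonal (fun j => (hA.eigenvalues j : ℂ)) * W := by
    conv_lhs => rw [hA.spectral_theorem, Unitary.conjStarAlgAut_apply]
    rw [hsW, hW]
    simp only [mul_assoc]
    rfl
  have hre : ∀ i, ((star U * A * U) i i).re = ∑ j, Complex.normSq (W j i) * hA.eigenvalues j := by
    intro i
    rw [hconj]
    have : (star W * diagonal (fun j => (hA.eigenvalues j : ℂ)) * W) i i
        = ↑(∑ j, Complex.normSq (W j i) * hA.eigenvalues j) := by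
      rw [mul_assoc, Matrix.mul_apply]
      push_cast
      congr 1; ext j
      rw [Matrix.diagonal_mul]
      simp only [Matrix.star_apply, Pi.star_apply, RCLike.star_def]
      rw [show (starRingEnd ℂ) (W j i) * ((hA.eigenvalues j : ℂ) * W j i)
          = ((starRingEnd ℂ) (W j i) * W j i) * (hA.eigenvalues j : ℂ) from by ring,
        ← Complex.normSq_eq_conj_mul_self]
    rw [this, Complex.ofReal_re]
  calc ∑ i, f ((star U * A * U) i i).re
      = ∑ i, f (∑ j, Complex.normSq (W j i) * hA.eigenvalues j) := by
        exact Finset.sum_congr rfl fun i _ => by rw [hre i]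
    _ ≤ ∑ i, ∑ j, Complex.normSq (W j i) * f (hA.eigenvalues j) := by
        refine Finset.sum_le_sum fun i _ => ?_
        have := hf.map_sum_le (t := Finset.univ) (w := fun j => Complex.normSq (W j i))
          (p := fun j => hA.eigenvalues j) (fun j _ => Complex.normSq_nonneg _)
          (col_norm hW1 i) (fun j _ => hAE j)
        simpa [smul_eq_mul] using this
    _ = ∑ j, (∑ i, Complex.normSq (W j i)) * f (hA.eigenvalues j) := by
        rw [Finset.sum_comm]
        simp [Finset.sum_mul]
    _ = ∑ j, f (hA.eigenvalues j) := by
        refine Finset.sum_congr rfl fun j _ => ?_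
        rw [row_norm hW2 j, one_mul]

lemma psub_isHermitian {m : ℕ} {A : Matrix (Fin m) (Fin m) ℂ} (hA : A.IsHermitian)
    (I : Finset (Fin m)) : (psub A I).IsHermitian := by
  ext i j
  simpa [psub, Matrix.conjTranspose_apply] using hA.apply (i : Fin m) (j : Fin m)

lemma sum_restrict {m : ℕ} (I : Finset (Fin m)) (F : Fin m → ℂ) (hF : ∀ x ∉ I, F x = 0) :
    ∑ x : Fin m, F x = ∑ x : I, F x := by
  rw [Finset.sum_coe_sort]
  exact (Finset.sum_subset (Finset.subset_univ I) (fun x _ hx => hF x hx)).symm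

lemma scalar_isHermitian {n : Type*} [Fintype n] [DecidableEq n] (x : ℝ) :
    ((x:ℂ) • (1 : Matrix n n ℂ)).IsHermitian := by
  rw [Matrix.IsHermitian, Matrix.conjTranspose_smul, Matrix.conjTranspose_one,
    RCLike.star_def, Complex.conj_ofReal]

lemma scalar_eigenvalues {n : Type*} [Fintype n] [DecidableEq n] (x : ℝ)
    (h : ((x:ℂ) • (1 : Matrix n n ℂ)).IsHermitian) (i : n) : h.eigenvalues i = x := by
  have hV1 : star (h.eigenvectorUnitary : Matrix n n ℂ) * (h.eigenvectorUnitary : Matrix n n ℂ)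
      = 1 := Matrix.mem_unitaryGroup_iff'.mp h.eigenvectorUnitary.2
  have hd := (by have hd0 := h.conjStarAlgAut_star_eigenvectorUnitary; rwa [Unitary.conjStarAlgAut_star_apply] at hd0)
  rw [Matrix.mul_smul, Matrix.smul_mul, mul_one, hV1] at hd
  have h2 := congrFun (congrFun hd i) i
  simp only [Matrix.smul_apply, Matrix.one_apply_eq, Matrix.diagonal_apply_eq,
    Function.comp_apply, smul_eq_mul, mul_one] at h2
  simpa using congrArg Complex.re h2.symm

lemma g_mono {E : Set ℝ} (g : ℝ → ℝ)
    (hg : ∀ (n : ℕ) (X Y : Matrix (Fin n) (Fin n) ℂ) (hX : X.IsHermitian)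
      (hY : Y.IsHermitian), (∀ i, hX.eigenvalues i ∈ interior E) →
      (∀ i, hY.eigenvalues i ∈ interior E) →
      (Y - X).PosSemidef → (matF g Y - matF g X).PosSemidef) :
    MonotoneOn g (interior E) := by
  intro x hx y hy hxy
  have hXH := scalar_isHermitian (n := Fin 1) x
  have hYH := scalar_isHermitian (n := Fin 1) y
  have hYX : (((y:ℂ) • (1 : Matrix (Fin 1) (Fin 1) ℂ)) - (x:ℂ) • 1).PosSemidef := by
    have hh : ((y:ℂ) • (1 : Matrix (Fin 1) (Fin 1) ℂ)) - (x:ℂ) • 1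
        = Matrix.diagonal (fun _ : Fin 1 => ((y - x : ℝ) : ℂ)) := by
      ext i j
      by_cases h : i = j
      · subst h; push_cast; simp [Matrix.one_apply]
      · simp [Matrix.one_apply, Matrix.diagonal_apply, h]
    rw [hh]
    exact Matrix.PosSemidef.diagonal
      (fun i => Complex.zero_le_real.mpr (sub_nonneg.mpr hxy))
  have hmatF : ∀ (z : ℝ) (hZ : ((z:ℂ) • (1 : Matrix (Fin 1) (Fin 1) ℂ)).IsHermitian),
      matF g ((z:ℂ) • 1) = ((g z : ℝ):ℂ) • (1 : Matrix (Fin 1) (Fin 1) ℂ) := by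
    intro z hZ
    have hV2 : (hZ.eigenvectorUnitary : Matrix (Fin 1) (Fin 1) ℂ)
        * star (hZ.eigenvectorUnitary : Matrix (Fin 1) (Fin 1) ℂ) = 1 :=
      Matrix.mem_unitaryGroup_iff.mp hZ.eigenvectorUnitary.2
    have hdiag : Matrix.diagonal (fun i : Fin 1 => (g (hZ.eigenvalues i) : ℂ))
        = ((g z : ℝ):ℂ) • (1 : Matrix (Fin 1) (Fin 1) ℂ) := by
      ext i j
      by_cases h : i = j
      · subst h; simp [Matrix.one_apply, scalar_eigenvalues z hZ]
      · simp [Matrix.one_apply, Matrix.diagonal_apply, h]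
    simp only [matF, dif_pos hZ]
    rw [hdiag, Matrix.mul_smul, Matrix.smul_mul, mul_one, hV2]
  have hpsd := hg 1 _ _ hXH hYH (fun i => by rw [scalar_eigenvalues x hXH]; exact hx)
    (fun i => by rw [scalar_eigenvalues y hYH]; exact hy) hYX
  rw [hmatF x hXH, hmatF y hYH] at hpsd
  have h00 := hpsd.dotProduct_mulVec_nonneg (fun _ => 1)
  have hval : star (fun _ : Fin 1 => (1:ℂ)) ⬝ᵥ
      ((((g y : ℝ):ℂ) • (1 : Matrix (Fin 1) (Fin 1) ℂ) - ((g x : ℝ):ℂ) • 1) *ᵥ fun _ => 1)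
      = ((g y - g x : ℝ) : ℂ) := by
    simp [dotProduct, Matrix.mulVec, Matrix.sub_apply, Matrix.one_apply]
  rw [hval] at h00
  have := Complex.zero_le_real.mp h00
  linarith

end Aux

section Aux2
lemma real_smul_eq {n : Type*} [Fintype n] (a : ℝ) (A : Matrix n n ℂ) : a • A = (a:ℂ) • A := by
  ext i j
  simp [Complex.real_smul]

lemma trF_eq {n : Type*} [Fintype n] [DecidableEq n] (f : ℝ → ℝ) {M : Matrix n n ℂ}
    (h : M.IsHermitian) : trF f M = ∑ i, f (h.eigenvalues i) := by
  simp only [trF, dif_pos h]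

lemma eig_combo_mem {n : Type*} [Fintype n] [DecidableEq n] {E : Set ℝ} (hE : Convex ℝ E)
    {A B : Matrix n n ℂ} (hAH : A.IsHermitian) (hBH : B.IsHermitian)
    (hAE : ∀ i, hAH.eigenvalues i ∈ E) (hBE : ∀ i, hBH.eigenvalues i ∈ E)
    {a b : ℝ} (ha : 0 ≤ a) (hb : 0 ≤ b) (hab : a + b = 1)
    (hC : (a • A + b • B).IsHermitian) (i : n) : hC.eigenvalues i ∈ E := by
  set v : n → ℂ := fun j => (hC.eigenvectorUnitary : Matrix n n ℂ) j i with hv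
  have hV1 : star (hC.eigenvectorUnitary : Matrix n n ℂ) *
      (hC.eigenvectorUnitary : Matrix n n ℂ) = 1 :=
    Matrix.mem_unitaryGroup_iff'.mp hC.eigenvectorUnitary.2
  have hv1 : star v ⬝ᵥ v = 1 := col_dot hV1 i
  have hval := diag_eq_eigenvalue hC i
  obtain ⟨rA, hrA, hAr⟩ := rayleigh_mem hE hAH hAE v hv1
  obtain ⟨rB, hrB, hBr⟩ := rayleigh_mem hE hBH hBE v hv1
  have hsplit : star v ⬝ᵥ (a • A + b • B) *ᵥ v
      = (a : ℂ) * (star v ⬝ᵥ A *ᵥ v) + (b : ℂ) * (star v ⬝ᵥ B *ᵥ v) := by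
    rw [real_smul_eq, real_smul_eq, Matrix.add_mulVec, Matrix.smul_mulVec,
      Matrix.smul_mulVec, dotProduct_add, dotProduct_smul,
      dotProduct_smul, smul_eq_mul, smul_eq_mul]
  have : (hC.eigenvalues i : ℂ) = ((a * rA + b * rB : ℝ) : ℂ) := by
    rw [← hval, hsplit, hAr, hBr]
    push_cast
    ring
  have heq : hC.eigenvalues i = a * rA + b * rB := by exact_mod_cast this
  rw [heq]
  simpa [smul_eq_mul] using hE hrA hrB ha hb hab

lemma psub_eig_mem {m : ℕ} {E : Set ℝ} (hE : Convex ℝ E) {A : Matrix (Fin m) (Fin m) ℂ}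
    (hA : A.IsHermitian) (hAE : ∀ i, hA.eigenvalues i ∈ E) (I : Finset (Fin m))
    (hA' : (psub A I).IsHermitian) (k : I) : hA'.eigenvalues k ∈ E := by
  set v : I → ℂ := fun j => (hA'.eigenvectorUnitary : Matrix I I ℂ) j k with hv
  have hV1 : star (hA'.eigenvectorUnitary : Matrix I I ℂ) *
      (hA'.eigenvectorUnitary : Matrix I I ℂ) = 1 :=
    Matrix.mem_unitaryGroup_iff'.mp hA'.eigenvectorUnitary.2
  have hv1 : star v ⬝ᵥ v = 1 := col_dot hV1 k
  have hval := diag_eq_eigenvalue hA' k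
  set w : (Fin m) → ℂ := fun x => if h : x ∈ I then v ⟨x, h⟩ else 0 with hwdef
  have hw0 : ∀ x ∉ I, w x = 0 := fun x hx => dif_neg hx
  have hwv : ∀ (x : I), w (x : Fin m) = v x := fun x => dif_pos x.2
  have hw1 : star w ⬝ᵥ w = 1 := by
    rw [← hv1]
    show ∑ x, star (w x) * w x = ∑ x : I, star (v x) * v x
    rw [sum_restrict I _ (fun x hx => by rw [hw0 x hx, mul_zero])]
    exact Finset.sum_congr rfl fun x _ => by rw [hwv]
  have hmul : ∀ x : Fin m, (A *ᵥ w) x = ∑ y : I, A x y * v y := by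
    intro x
    show ∑ y, A x y * w y = _
    rw [sum_restrict I _ (fun y hy => by rw [hw0 y hy, mul_zero])]
    exact Finset.sum_congr rfl fun y _ => by rw [hwv]
  have hwA : star w ⬝ᵥ A *ᵥ w = star v ⬝ᵥ (psub A I) *ᵥ v := by
    show ∑ x, star (w x) * (A *ᵥ w) x = ∑ x : I, star (v x) * ((psub A I) *ᵥ v) x
    rw [sum_restrict I _ (fun x hx => by rw [hw0 x hx, star_zero, zero_mul])]
    refine Finset.sum_congr rfl fun x _ => ?_
    rw [hwv, hmul]
    rfl
  obtain ⟨r, hrE, hr⟩ := rayleigh_mem hE hA hAE w hw1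
  have : (hA'.eigenvalues k : ℂ) = (r : ℂ) := by rw [← hval, ← hwA, hr]
  rw [show hA'.eigenvalues k = r from by exact_mod_cast this]
  exact hrE
end Aux2

lemma herm_combo {n : Type*} [Fintype n] {A B : Matrix n n ℂ}
    (hAH : A.IsHermitian) (hBH : B.IsHermitian) (a b : ℝ) :
    (a • A + b • B).IsHermitian := by
  rw [real_smul_eq, real_smul_eq]
  have h1 : ((a:ℂ) • A).IsHermitian := by
    rw [Matrix.IsHermitian, Matrix.conjTranspose_smul, RCLike.star_def, Complex.conj_ofReal,
      hAH.eq]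
  have h2 : ((b:ℂ) • B).IsHermitian := by
    rw [Matrix.IsHermitian, Matrix.conjTranspose_smul, RCLike.star_def, Complex.conj_ofReal,
      hBH.eq]
  exact h1.add h2

/-- Let `f` be continuous on an interval `E` and a primitive of a function `g`
that is operator monotone on the interior of `E` (i.e. `X ⪯ Y` implies
`g(X) ⪯ g(Y)` for Hermitian matrices of any size with spectra in the interior
of `E`).  Then for each fixed `I`, the map `A ↦ tr f(A[I])` is convex on the
(convex) set of Hermitian matrices with spectrum in `E`. -/
theorem trace_primitive_opMonotone_convexOn {m : ℕ}
    (E : Set ℝ) (hE : E.OrdConnected) (f g : ℝ → ℝ)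
    (hf : ContinuousOn f E)
    (hfg : ∀ x ∈ interior E, HasDerivAt f (g x) x)
    (hg : ∀ (n : ℕ) (X Y : Matrix (Fin n) (Fin n) ℂ) (hX : X.IsHermitian)
      (hY : Y.IsHermitian), (∀ i, hX.eigenvalues i ∈ interior E) →
      (∀ i, hY.eigenvalues i ∈ interior E) →
      (Y - X).PosSemidef → (matF g Y - matF g X).PosSemidef)
    (I : Finset (Fin m)) :
    ConvexOn ℝ {A : Matrix (Fin m) (Fin m) ℂ | ∃ h : A.IsHermitian, ∀ i, h.eigenvalues i ∈ E}
      (fun A => trF f (psub A I)) := by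
  have hEc : Convex ℝ E := convex_iff_ordConnected.mpr hE
  have hgm : MonotoneOn g (interior E) := g_mono g hg
  have hfc : ConvexOn ℝ E f := by
    refine MonotoneOn.convexOn_of_deriv hEc hf ?_ ?_
    · exact fun x hx => ((hfg x hx).differentiableAt).differentiableWithinAt
    · intro x hx y hy hxy
      rw [(hfg x hx).deriv, (hfg y hy).deriv]
      exact hgm hx hy hxy
  constructor
  · intro A hA B hB a b ha hb hab
    obtain ⟨hAH, hAE⟩ := hA
    obtain ⟨hBH, hBE⟩ := hB
    exact ⟨herm_combo hAH hBH a b,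
      fun i => eig_combo_mem hEc hAH hBH hAE hBE ha hb hab _ i⟩
  · intro A hA B hB a b ha hb hab
    obtain ⟨hAH, hAE⟩ := hA
    obtain ⟨hBH, hBE⟩ := hB
    have hA'H := psub_isHermitian hAH I
    have hB'H := psub_isHermitian hBH I
    have hA'E : ∀ k, hA'H.eigenvalues k ∈ E := fun k => psub_eig_mem hEc hAH hAE I hA'H k
    have hB'E : ∀ k, hB'H.eigenvalues k ∈ E := fun k => psub_eig_mem hEc hBH hBE I hB'H k
    have hpsub : psub (a • A + b • B) I = a • psub A I + b • psub B I := by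
      ext i j
      simp [psub, Matrix.submatrix_apply]
    have hMH : (a • psub A I + b • psub B I).IsHermitian := herm_combo hA'H hB'H a b
    show trF f (psub (a • A + b • B) I) ≤ a * trF f (psub A I) + b * trF f (psub B I)
    rw [hpsub, trF_eq f hMH, trF_eq f hA'H, trF_eq f hB'H]
    set V := (hMH.eigenvectorUnitary : Matrix I I ℂ) with hVdef
    have hV1 : star V * V = 1 := Matrix.mem_unitaryGroup_iff'.mp hMH.eigenvectorUnitary.2
    have hV2 : V * star V = 1 := Matrix.mem_unitaryGroup_iff.mp hMH.eigenvectorUnitary.2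
    have hsplit : ∀ i : I, (star V * (a • psub A I + b • psub B I) * V) i i
        = (a:ℂ) * ((star V * psub A I * V) i i) + (b:ℂ) * ((star V * psub B I * V) i i) := by
      intro i
      rw [real_smul_eq, real_smul_eq]
      simp [Matrix.mul_add, Matrix.add_mul, Matrix.mul_smul, Matrix.smul_mul,
        Matrix.add_apply, Matrix.smul_apply, smul_eq_mul]
    have heig : ∀ i : I, hMH.eigenvalues i
        = ((star V * (a • psub A I + b • psub B I) * V) i i).re := by
      intro i
      have h := congrFun (congrFun (show star (hMH.eigenvectorUnitary : Matrix I I ℂ) * (a • psub A I + b • psub B I) * (hMH.eigenvectorUnitary : Matrix I I ℂ) = diagonal (RCLike.ofReal ∘ hMH.eigenvalues) from by have hd0 := hMH.conjStarAlgAut_star_eigenvectorUnitary; rwa [Unitary.conjStarAlgAut_star_apply] at hd0) i) i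
      rw [h]
      simp
    have hαE : ∀ i : I, ((star V * psub A I * V) i i).re ∈ E := by
      intro i
      rw [diag_conj]
      obtain ⟨r, hrE, hr⟩ := rayleigh_mem hEc hA'H hA'E _ (col_dot hV1 i)
      rw [hr]
      simpa using hrE
    have hβE : ∀ i : I, ((star V * psub B I * V) i i).re ∈ E := by
      intro i
      rw [diag_conj]
      obtain ⟨r, hrE, hr⟩ := rayleigh_mem hEc hB'H hB'E _ (col_dot hV1 i)
      rw [hr]
      simpa using hrE
    calc ∑ i, f (hMH.eigenvalues i)
        ≤ ∑ i : I, (a * f (((star V * psub A I * V) i i).re)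
            + b * f (((star V * psub B I * V) i i).re)) := by
          refine Finset.sum_le_sum fun i _ => ?_
          rw [heig i, hsplit i]
          have hre : ((a:ℂ) * ((star V * psub A I * V) i i)
              + (b:ℂ) * ((star V * psub B I * V) i i)).re
              = a * ((star V * psub A I * V) i i).re
                + b * ((star V * psub B I * V) i i).re := by
            simp [Complex.add_re, Complex.re_ofReal_mul]
          rw [hre]
          have := hfc.2 (hαE i) (hβE i) ha hb hab
          simpa [smul_eq_mul] using this
      _ = a * (∑ i : I, f (((star V * psub A I * V) i i).re))
            + b * (∑ i : I, f (((star V * psub B I * V) i i).re)) := by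
          rw [Finset.sum_add_distrib, Finset.mul_sum, Finset.mul_sum]
      _ ≤ a * (∑ i, f (hA'H.eigenvalues i)) + b * (∑ i, f (hB'H.eigenvalues i)) := by
          have hpA := peierls hfc hA'H hA'E hV1 hV2
          have hpB := peierls hfc hB'H hB'E hV1 hV2
          exact add_le_add (mul_le_mul_of_nonneg_left hpA ha)
            (mul_le_mul_of_nonneg_left hpB hb)
end
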